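/- Let m_n be the number of Motzkin paths of length n avoiding the factor UHU (with generating function m(z) satisfying z^2(z^2-z+1)m^2 - (1-z-z^3)m + 1 = 0, m(0)=1). Then for all n ≥ 3: m_n = m_{n-1} + m_{n-2} + m_{n-3} + sum_{k=2}^{n-2} m_{k-2}*m_{n-k-2} + sum_{k=3}^{n-1} (m_{k-1} - m_{k-2})*m_{n-k-1}. -/

import Mathlib

open PowerSeries Finset

/-- With `m_n` the number of Motzkin paths of length `n` avoiding the factor `UHU`
(whose generating function satisfies `z^2(z^2-z+1)m^2 - (1-z-z^3)m + 1 = 0`, `m(0)=1`),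
for all `n ≥ 3`:
`m_n = m_{n-1} + m_{n-2} + m_{n-3} + ∑_{k=2}^{n-2} m_{k-2} m_{n-k-2}
       + ∑_{k=3}^{n-1} (m_{k-1} - m_{k-2}) m_{n-k-1}`. -/
theorem UUless_recurrence (M : PowerSeries ℚ)
    (hM : X^2 * (X^2 - X + 1) * M^2 - (1 - X - X^3) * M + 1 = 0)
    (hM0 : constantCoeff M = 1)
    (m : ℕ → ℚ) (hm : ∀ n, m n = coeff n M) :
    ∀ n : ℕ, 3 ≤ n →
      m n = m (n - 1) + m (n - 2) + m (n - 3) +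
        (∑ k ∈ Finset.Icc 2 (n - 2), m (k - 2) * m (n - k - 2)) +
        ∑ k ∈ Finset.Icc 3 (n - 1), (m (k - 1) - m (k - 2)) * m (n - k - 1) := by
  have key : M = 1 + X^1*M + X^3*M + X^2*M^2 - X^3*M^2 + X^4*M^2 := by
    linear_combination -hM
  have hm0 : m 0 = 1 := by rw [hm, coeff_zero_eq_constantCoeff]; exact hM0
  have hc : ∀ k, coeff k (M^2) = ∑ j ∈ range (k+1), m j * m (k - j) := by
    intro k
    rw [pow_two, coeff_mul, Finset.Nat.sum_antidiagonal_eq_sum_range_succ_mk]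
    simp [hm]
  have hco : ∀ k : ℕ, m k =
      coeff k (1:PowerSeries ℚ) + coeff k (X^1*M) + coeff k (X^3*M)
      + coeff k (X^2*M^2) - coeff k (X^3*M^2) + coeff k (X^4*M^2) := by
    intro k
    rw [hm]
    conv_lhs => rw [key]
    simp
  have hXmul : ∀ (f : PowerSeries ℚ) (a d : ℕ),
      coeff d (X^a * f) = if a ≤ d then coeff (d - a) f else 0 :=
    fun f a d => coeff_X_pow_mul' f a d
  have hm1 : m 1 = 1 := by
    have h := hco 1
    simp only [hXmul] at h
    simpa [coeff_zero_eq_constantCoeff, hM0] using h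
  intro n hn
  obtain ⟨N, rfl⟩ : ∃ N, n = N + 3 := ⟨n - 3, by omega⟩
  match N with
  | 0 =>
    have h3 := hco 3
    simp only [hXmul] at h3
    norm_num [hc, Finset.sum_range_succ, coeff_zero_eq_constantCoeff, hM0, ← hm] at h3
    show m 3 = m 2 + m 1 + m 0 + _ + _
    have e1 : Finset.Icc 2 (0+3-2) = (∅ : Finset ℕ) := rfl
    have e2 : Finset.Icc 3 (0+3-1) = (∅ : Finset ℕ) := rfl
    rw [e1, e2, Finset.sum_empty, Finset.sum_empty]
    rw [hm0, hm1] at h3 ⊢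
    rw [h3]; ring
  | (N+1) =>
    have h := hco (N+4)
    simp only [hXmul] at h
    norm_num at h
    rw [show N+4-3 = N+1 from by omega, show N+4-2 = N+2 from by omega] at h
    rw [← hm (N+3), ← hm (N+1), hc, hc, hc] at h
    have c2 : ∑ j ∈ range (N+2+1), m j * m (N+2 - j)
        = m (N+2) + m (N+1) + ∑ j ∈ range (N+1), m (j+2) * m (N - j) := by
      rw [Finset.sum_range_succ', Finset.sum_range_succ']
      have e : ∀ j ∈ range (N+1), m (j+1+1) * m (N+2-(j+1+1)) = m (j+2) * m (N-j) := by
        intro j hj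
        rw [show j+1+1 = j+2 from rfl, show N+2-(j+2) = N-j from by omega]
      rw [Finset.sum_congr rfl e]
      norm_num [hm0, hm1]
      ring
    have c1 : ∑ j ∈ range (N+1+1), m j * m (N+1 - j)
        = m (N+1) + ∑ j ∈ range (N+1), m (j+1) * m (N - j) := by
      rw [Finset.sum_range_succ']
      have e : ∀ j ∈ range (N+1), m (j+1) * m (N+1-(j+1)) = m (j+1) * m (N-j) := by
        intro j hj
        rw [show N+1-(j+1) = N-j from by omega]
      rw [Finset.sum_congr rfl e]
      norm_num [hm0]
      ring
    rw [c2, c1] at h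
    have e1 : (N+1+3-1) = N+3 := by omega
    have e2 : (N+1+3-2) = N+2 := by omega
    have e3 : (N+1+3-3) = N+1 := by omega
    rw [e1, e2, e3, show N+1+3 = N+4 from by omega]
    have s1 : ∑ k ∈ Finset.Icc 2 (N+2), m (k - 2) * m (N+1+3 - k - 2)
        = ∑ j ∈ range (N+1), m j * m (N - j) := by
      rw [← Finset.Ico_add_one_right_eq_Icc, Finset.sum_Ico_eq_sum_range]
      rw [show N+2+1-2 = N+1 from by omega]
      refine Finset.sum_congr rfl fun j hj => ?_
      simp only [Finset.mem_range] at hj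
      rw [show 2+j-2 = j from by omega, show N+1+3-(2+j)-2 = N-j from by omega]
    have s2 : ∑ k ∈ Finset.Icc 3 (N+3), (m (k - 1) - m (k - 2)) * m (N+1+3 - k - 1)
        = ∑ j ∈ range (N+1), (m (j+2) - m (j+1)) * m (N - j) := by
      rw [← Finset.Ico_add_one_right_eq_Icc, Finset.sum_Ico_eq_sum_range]
      rw [show N+3+1-3 = N+1 from by omega]
      refine Finset.sum_congr rfl fun j hj => ?_
      simp only [Finset.mem_range] at hj
      rw [show 3+j-1 = j+2 from by omega, show 3+j-2 = j+1 from by omega,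
          show N+1+3-(3+j)-1 = N-j from by omega]
    rw [s1, s2]
    have hD : ∑ j ∈ range (N+1), (m (j+2) - m (j+1)) * m (N - j)
        = (∑ j ∈ range (N+1), m (j+2) * m (N - j))
          - ∑ j ∈ range (N+1), m (j+1) * m (N - j) := by
      rw [← Finset.sum_sub_distrib]
      exact Finset.sum_congr rfl fun j _ => by ring
    rw [hD, h]
    ring
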